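/- If M is a mixing quantum channel, then for every p ∈ (0,1] and every quantum channel M', the channel p M + (1-p) M' is mixing. -/

import Mathlib

open Matrix
open scoped ComplexOrder

noncomputable section

abbrev Mat (d : ℕ) := Matrix (Fin d) (Fin d) ℂ

/-- `K` is a Kraus representation of the linear map `Φ`. -/
def IsKrausRep {d : ℕ} (Φ : Mat d →ₗ[ℂ] Mat d) {n : ℕ} (K : Fin n → Mat d) : Prop :=
  (∀ A, Φ A = ∑ i, K i * A * (K i)ᴴ) ∧ ∑ i, (K i)ᴴ * K i = 1

/-- A quantum channel: completely positive trace-preserving map, i.e. admitting a Kraus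
representation with the normalization condition. -/
def IsCPTP {d : ℕ} (Φ : Mat d →ₗ[ℂ] Mat d) : Prop :=
  ∃ (n : ℕ) (K : Fin n → Mat d), IsKrausRep Φ K

/-- A density matrix: positive semidefinite with unit trace. -/
def IsDensity {d : ℕ} (ρ : Mat d) : Prop := ρ.PosSemidef ∧ ρ.trace = 1

/-- Ergodicity: the channel has a unique fixed point density matrix. -/
def IsErgodic {d : ℕ} (Φ : Mat d →ₗ[ℂ] Mat d) : Prop :=
  ∃! ρ : Mat d, IsDensity ρ ∧ Φ ρ = ρ

/-- The support of an operator, viewed as a subspace of `ℂ^d`. -/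
def supp {d : ℕ} (ρ : Mat d) : Submodule ℂ (Fin d → ℂ) := LinearMap.range ρ.mulVecLin

/-- The trace norm `‖A‖₁ = Tr √(A†A)`. -/
def traceNorm {d : ℕ} (A : Mat d) : ℝ :=
  (((Matrix.posSemidef_conjTranspose_mul_self A).1.eigenvectorUnitary.1 *
      Matrix.diagonal (((↑) : ℝ → ℂ) ∘ (√·) ∘ (Matrix.posSemidef_conjTranspose_mul_self A).1.eigenvalues) *
      (star (Matrix.posSemidef_conjTranspose_mul_self A).1.eigenvectorUnitary : Mat d)).trace).re

/-- Mixing: iterates of the channel converge in trace norm to a unique state. -/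
def IsMixing {d : ℕ} (Φ : Mat d →ₗ[ℂ] Mat d) : Prop :=
  ∃ ρs : Mat d, IsDensity ρs ∧ ∀ ρ : Mat d, IsDensity ρ →
    Filter.Tendsto (fun k : ℕ => traceNorm ((Φ ^ k) ρ - ρs)) Filter.atTop (nhds 0)

/-- A subspace `S` is invariant for a channel if every Kraus operator (of any Kraus
representation) maps `S` into itself. -/
def IsInvariantSubspace {d : ℕ} (Φ : Mat d →ₗ[ℂ] Mat d) (S : Submodule ℂ (Fin d → ℂ)) : Prop :=
  ∀ (n : ℕ) (K : Fin n → Mat d), IsKrausRep Φ K → ∀ i, ∀ x ∈ S, (K i).mulVec x ∈ S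

section Sq
open scoped MatrixOrder
variable {d : ℕ}

def msqrt (A : Mat d) : Mat d :=
  (Matrix.posSemidef_conjTranspose_mul_self A).1.eigenvectorUnitary.1 *
      Matrix.diagonal (((↑) : ℝ → ℂ) ∘ (√·) ∘ (Matrix.posSemidef_conjTranspose_mul_self A).1.eigenvalues) *
      (star (Matrix.posSemidef_conjTranspose_mul_self A).1.eigenvectorUnitary : Mat d)

lemma traceNorm_eq_msqrt (A : Mat d) : traceNorm A = (msqrt A).trace.re := rfl

lemma msqrt_eq_sqrt (A : Mat d) : msqrt A = CFC.sqrt (Aᴴ * A) := by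
  rw [CFC.sqrt_eq_real_sqrt _ (posSemidef_conjTranspose_mul_self A).nonneg, cfcₙ_eq_cfc,
    (posSemidef_conjTranspose_mul_self A).1.cfc_eq, IsHermitian.cfc, Unitary.conjStarAlgAut_apply]
  rfl

lemma msqrt_psd (A : Mat d) : (msqrt A).PosSemidef := by
  rw [msqrt_eq_sqrt]; exact (CFC.sqrt_nonneg _).posSemidef

lemma msqrt_sq (A : Mat d) : msqrt A ^ 2 = Aᴴ * A := by
  rw [msqrt_eq_sqrt]; exact CFC.sq_sqrt _ (posSemidef_conjTranspose_mul_self A).nonneg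

lemma msqrt_unique {A P : Mat d} (hP : P.PosSemidef) (h : P ^ 2 = Aᴴ * A) : msqrt A = P := by
  rw [msqrt_eq_sqrt]; exact CFC.sqrt_unique (by rw [← sq]; exact h) hP.nonneg

end Sq

section Aux
variable {d : ℕ}

lemma traceNorm_eq {A P : Mat d} (hP : P.PosSemidef) (h : P ^ 2 = Aᴴ * A) :
    traceNorm A = P.trace.re := by
  rw [traceNorm_eq_msqrt, msqrt_unique hP h]

lemma real_smul_eq (r : ℝ) (M : Mat d) : (r : ℂ) • M = r • M := by
  rw [← Complex.coe_algebraMap, algebraMap_smul]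

lemma isHermitian_smul_real {A : Mat d} (hA : A.IsHermitian) (r : ℝ) :
    (r • A).IsHermitian := by
  ext i j
  have := congrFun (congrFun hA i) j
  simp only [conjTranspose_apply, Matrix.smul_apply, star_smul, star_trivial] at *
  rw [this]

lemma posSemidef_smul_real {A : Mat d} (hA : A.PosSemidef) {r : ℝ} (hr : 0 ≤ r) :
    (r • A).PosSemidef := by
  rw [← real_smul_eq]
  exact hA.smul (Complex.zero_le_real.2 hr)

lemma trace_conj_unitary {U D : Mat d} (hU : star U * U = 1) :
    (U * D * star U).trace = D.trace := by
  rw [trace_mul_cycle, hU, Matrix.one_mul]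

/-- conjugation of a nonneg diagonal by (co)isometry is PSD -/
lemma psd_conj_diag (U : Mat d) {f : Fin d → ℝ} (hf : ∀ i, 0 ≤ f i) :
    (U * diagonal (fun i => (f i : ℂ)) * star U).PosSemidef := by
  rw [Matrix.star_eq_conjTranspose]
  exact (posSemidef_diagonal_iff.mpr fun i => Complex.zero_le_real.2 (hf i)).mul_mul_conjTranspose_same U

lemma sq_conj_diag {U : Mat d} (hU : star U * U = 1) (f g : Fin d → ℝ) :
    (U * diagonal (fun i => (f i : ℂ)) * star U) * (U * diagonal (fun i => (g i : ℂ)) * star U)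
      = U * diagonal (fun i => ((f i * g i : ℝ) : ℂ)) * star U := by
  have : (U * diagonal (fun i => (f i : ℂ)) * star U) * (U * diagonal (fun i => (g i : ℂ)) * star U)
      = U * (diagonal (fun i => (f i : ℂ)) * diagonal (fun i => (g i : ℂ))) * star U := by
    calc (U * diagonal (fun i => (f i : ℂ)) * star U) * (U * diagonal (fun i => (g i : ℂ)) * star U)
        = U * diagonal (fun i => (f i : ℂ)) * ((star U * U) * (diagonal (fun i => (g i : ℂ)) * star U)) := by
          simp only [Matrix.mul_assoc]
      _ = U * (diagonal (fun i => (f i : ℂ)) * diagonal (fun i => (g i : ℂ))) * star U := by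
          rw [hU, Matrix.one_mul]; simp only [Matrix.mul_assoc]
  rw [this, diagonal_mul_diagonal]
  push_cast
  rfl

lemma trace_re_conj_diag {U : Mat d} (hU : star U * U = 1) (f : Fin d → ℝ) :
    (U * diagonal (fun i => (f i : ℂ)) * star U).trace.re = ∑ i, f i := by
  rw [trace_conj_unitary hU, trace_diagonal]
  rw [← Complex.ofReal_sum]
  exact Complex.ofReal_re _

lemma exists_unitary_spectral {A : Mat d} (hA : A.IsHermitian) :
    ∃ U : Mat d, star U * U = 1 ∧ U * star U = 1 ∧
      A = U * diagonal (fun i => ((hA.eigenvalues i : ℝ) : ℂ)) * star U :=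
  ⟨hA.eigenvectorUnitary, mem_unitaryGroup_iff'.mp hA.eigenvectorUnitary.2,
    mem_unitaryGroup_iff.mp hA.eigenvectorUnitary.2, (hA.spectral_theorem.trans (by rw [Unitary.conjStarAlgAut_apply]; rfl))⟩

lemma traceNorm_hermitian {A : Mat d} (hA : A.IsHermitian) :
    traceNorm A = ∑ i, |hA.eigenvalues i| := by
  obtain ⟨U, hU, hU', hspec⟩ := exists_unitary_spectral hA
  set l := hA.eigenvalues with hl
  have hP : (U * diagonal (fun i => ((|l i| : ℝ) : ℂ)) * star U).PosSemidef :=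
    psd_conj_diag U fun i => abs_nonneg _
  have hsq : (U * diagonal (fun i => ((|l i| : ℝ) : ℂ)) * star U) ^ 2 = Aᴴ * A := by
    rw [hA.eq, pow_two, sq_conj_diag hU]
    conv_rhs => rw [hspec]
    rw [sq_conj_diag hU]
    have : (fun i => ((|l i| * |l i| : ℝ) : ℂ)) = fun i => ((l i * l i : ℝ) : ℂ) := by
      funext i; rw [abs_mul_abs_self]
    rw [this]
  rw [traceNorm_eq hP hsq, trace_re_conj_diag hU]

lemma traceNorm_of_posSemidef {A : Mat d} (hA : A.PosSemidef) : traceNorm A = A.trace.re :=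
  traceNorm_eq hA (by rw [pow_two, hA.1.eq])

lemma traceNorm_nonneg (A : Mat d) : 0 ≤ traceNorm A := by
  have h := (Matrix.posSemidef_conjTranspose_mul_self A)
  have e : traceNorm A = traceNorm (msqrt A) :=
    (traceNorm_eq (msqrt_psd A) (msqrt_sq A)).trans
      (traceNorm_of_posSemidef (msqrt_psd A)).symm
  rw [e, traceNorm_hermitian (msqrt_psd A).1]
  exact Finset.sum_nonneg fun i _ => abs_nonneg _

lemma traceNorm_zero : traceNorm (0 : Mat d) = 0 := by
  rw [traceNorm_of_posSemidef Matrix.PosSemidef.zero]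
  simp

lemma traceNorm_smul_real (r : ℝ) (A : Mat d) : traceNorm (r • A) = |r| * traceNorm A := by
  have h := (Matrix.posSemidef_conjTranspose_mul_self A)
  have hP : (|r| • msqrt A).PosSemidef := posSemidef_smul_real (msqrt_psd A) (abs_nonneg r)
  have hsq : (|r| • msqrt A) ^ 2 = (r • A)ᴴ * (r • A) := by
    rw [smul_pow, (msqrt_sq A), ← real_smul_eq r A, conjTranspose_smul, smul_mul_smul_comm,
      Complex.star_def, Complex.conj_ofReal, ← Complex.ofReal_mul, real_smul_eq, sq_abs, pow_two]
  rw [traceNorm_eq hP hsq, trace_smul, traceNorm_eq (msqrt_psd A) (msqrt_sq A)]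
  simp [Complex.real_smul, Complex.re_ofReal_mul]

lemma traceNorm_neg (A : Mat d) : traceNorm (-A) = traceNorm A := by
  have : (-A) = (-1 : ℝ) • A := by simp
  rw [this, traceNorm_smul_real]
  simp

end Aux

section Aux2
variable {d : ℕ}

lemma sum_abs_diag_conj_le {A V : Mat d} (hA : A.IsHermitian)
    (hV : star V * V = 1) (hV' : V * star V = 1) :
    ∑ i, ‖(star V * A * V) i i‖ ≤ traceNorm A := by
  obtain ⟨U, hU, hU', hspec⟩ := exists_unitary_spectral hA
  set l := hA.eigenvalues with hl
  rw [traceNorm_hermitian hA, ← hl]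
  set W : Mat d := star U * V with hW
  have h1 : W * star W = 1 := by
    rw [hW, Matrix.star_mul, star_star]
    calc star U * V * (star V * U) = star U * ((V * star V) * U) := by simp only [Matrix.mul_assoc]
      _ = 1 := by rw [hV', Matrix.one_mul, hU]
  have hWrow : ∀ j, ∑ i, Complex.normSq (W j i) = 1 := by
    intro j
    have h2 := congrFun (congrFun h1 j) j
    rw [Matrix.mul_apply] at h2
    have h3 : (1 : Mat d) j j = ∑ i, (Complex.normSq (W j i) : ℂ) := by
      rw [← h2]
      refine Finset.sum_congr rfl fun i _ => ?_
      rw [Matrix.star_apply, Complex.star_def, Complex.mul_conj]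
    rw [Matrix.one_apply_eq] at h3
    have h4 := congrArg Complex.re h3.symm
    rw [← Complex.ofReal_sum] at h4
    simpa using h4
  have hconv : star V * A * V = star W * (diagonal (fun i => (l i : ℂ)) * W) := by
    rw [hW, hspec, Matrix.star_mul, star_star]
    simp only [Matrix.mul_assoc]
  have hentry : ∀ i, (star V * A * V) i i
      = ∑ j, star (W j i) * ((l j : ℂ) * W j i) := by
    intro i
    rw [hconv, Matrix.mul_apply]
    refine Finset.sum_congr rfl fun j _ => ?_
    rw [Matrix.star_apply, Matrix.diagonal_mul]
  have habs : ∀ (c : ℝ) (z : ℂ), ‖star z * ((c : ℂ) * z)‖ = |c| * Complex.normSq z := by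
    intro c z
    rw [norm_mul, norm_mul, Complex.norm_real, Real.norm_eq_abs, ← Complex.sq_norm,
      Complex.star_def, Complex.norm_conj]
    ring
  calc ∑ i, ‖(star V * A * V) i i‖
      ≤ ∑ i, ∑ j, |l j| * Complex.normSq (W j i) := by
        refine Finset.sum_le_sum fun i _ => ?_
        rw [hentry i]
        refine (norm_sum_le _ _).trans_eq (Finset.sum_congr rfl fun j _ => habs _ _)
    _ = ∑ j, |l j| * ∑ i, Complex.normSq (W j i) := by
        rw [Finset.sum_comm]
        exact Finset.sum_congr rfl fun j _ => (Finset.mul_sum _ _ _).symm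
    _ = ∑ j, |l j| := by simp [hWrow]

lemma traceNorm_add_le {A B : Mat d} (hA : A.IsHermitian) (hB : B.IsHermitian) :
    traceNorm (A + B) ≤ traceNorm A + traceNorm B := by
  have hAB : (A + B).IsHermitian := hA.add hB
  obtain ⟨U, hU, hU', hspec⟩ := exists_unitary_spectral hAB
  set l := hAB.eigenvalues with hl
  have hdiag : star U * (A + B) * U = diagonal (fun i => (l i : ℂ)) := by
    rw [hspec]
    calc star U * (U * diagonal (fun i => (l i : ℂ)) * star U) * U
        = (star U * U) * diagonal (fun i => (l i : ℂ)) * (star U * U) := by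
          simp only [Matrix.mul_assoc]
      _ = diagonal (fun i => (l i : ℂ)) := by rw [hU, Matrix.one_mul, Matrix.mul_one]
  rw [traceNorm_hermitian hAB, ← hl]
  calc ∑ i, |l i| = ∑ i, ‖(star U * (A + B) * U) i i‖ := by
        refine Finset.sum_congr rfl fun i _ => ?_
        rw [hdiag, diagonal_apply_eq, Complex.norm_real, Real.norm_eq_abs]
    _ ≤ ∑ i, (‖(star U * A * U) i i‖ + ‖(star U * B * U) i i‖) := by
        refine Finset.sum_le_sum fun i _ => ?_
        have he : (star U * (A + B) * U) i i
            = (star U * A * U) i i + (star U * B * U) i i := by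
          rw [Matrix.mul_add, Matrix.add_mul, Matrix.add_apply]
        rw [he]
        exact norm_add_le _ _
    _ ≤ traceNorm A + traceNorm B := by
        rw [Finset.sum_add_distrib]
        exact add_le_add (sum_abs_diag_conj_le hA hU hU') (sum_abs_diag_conj_le hB hU hU')

lemma traceNorm_sub_le {A B : Mat d} (hA : A.IsHermitian) (hB : B.IsHermitian) :
    traceNorm (A - B) ≤ traceNorm A + traceNorm B := by
  rw [sub_eq_add_neg, ← traceNorm_neg B]
  exact traceNorm_add_le hA hB.neg

lemma isHermitian_sum {ι : Type*} (s : Finset ι) (f : ι → Mat d)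
    (h : ∀ i ∈ s, (f i).IsHermitian) : (∑ i ∈ s, f i).IsHermitian := by
  unfold Matrix.IsHermitian
  rw [conjTranspose_sum]
  exact Finset.sum_congr rfl h

lemma posSemidef_sum {ι : Type*} (s : Finset ι) (f : ι → Mat d)
    (h : ∀ i ∈ s, (f i).PosSemidef) : (∑ i ∈ s, f i).PosSemidef := by
  induction s using Finset.cons_induction with
  | empty => simpa using Matrix.PosSemidef.zero
  | cons a s ha ih =>
    rw [Finset.sum_cons]
    exact ((h a (Finset.mem_cons_self a s))).add (ih fun i hi => h i (Finset.mem_cons_of_mem hi))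

lemma traceNorm_sum_le {ι : Type*} (s : Finset ι) (f : ι → Mat d)
    (h : ∀ i ∈ s, (f i).IsHermitian) :
    traceNorm (∑ i ∈ s, f i) ≤ ∑ i ∈ s, traceNorm (f i) := by
  induction s using Finset.cons_induction with
  | empty => simp [traceNorm_zero]
  | cons a s ha ih =>
    rw [Finset.sum_cons, Finset.sum_cons]
    refine (traceNorm_add_le (h a (Finset.mem_cons_self a s))
      (isHermitian_sum s f fun i hi => h i (Finset.mem_cons_of_mem hi))).trans ?_
    exact add_le_add_right (ih fun i hi => h i (Finset.mem_cons_of_mem hi)) _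

lemma trace_re_conjTranspose_mul_self (A : Mat d) :
    (Aᴴ * A).trace.re = ∑ j, ∑ k, Complex.normSq (A k j) := by
  have h : (Aᴴ * A).trace = ((∑ j, ∑ k, Complex.normSq (A k j) : ℝ) : ℂ) := by
    rw [Matrix.trace]
    push_cast
    refine Finset.sum_congr rfl fun j _ => ?_
    rw [Matrix.diag_apply, Matrix.mul_apply]
    refine Finset.sum_congr rfl fun k _ => ?_
    rw [Matrix.conjTranspose_apply, Complex.star_def, mul_comm, Complex.mul_conj]
  rw [h, Complex.ofReal_re]

lemma herm_trace_sq {A : Mat d} (hA : A.IsHermitian) :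
    (Aᴴ * A).trace.re = ∑ i, hA.eigenvalues i ^ 2 := by
  obtain ⟨U, hU, hU', hspec⟩ := exists_unitary_spectral hA
  set l := hA.eigenvalues with hl
  have : Aᴴ * A = U * diagonal (fun i => ((l i * l i : ℝ) : ℂ)) * star U := by
    rw [hA.eq]
    conv_lhs => rw [hspec]
    rw [sq_conj_diag hU]
  rw [this, trace_re_conj_diag hU]
  exact Finset.sum_congr rfl fun i _ => (pow_two _).symm

lemma psd_trace_re_eq_traceNorm {P : Mat d} (hP : P.PosSemidef) :
    P.trace.re = traceNorm P := by
  rw [traceNorm_of_posSemidef hP]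

lemma traceNorm_eq_traceNorm_sqrt (A : Mat d) :
    traceNorm A = traceNorm (msqrt A) := by
  have h := posSemidef_conjTranspose_mul_self A
  rw [traceNorm_eq (msqrt_psd A) (msqrt_sq A), psd_trace_re_eq_traceNorm (msqrt_psd A)]

lemma abs_entry_le_traceNorm {A : Mat d} (i j : Fin d) :
    ‖A i j‖ ≤ traceNorm A := by
  have h := posSemidef_conjTranspose_mul_self A
  set P := msqrt A with hPdef
  have hP : P.PosSemidef := (msqrt_psd A)
  -- step 1 : |A i j|^2 ≤ (Aᴴ A).trace.re
  have h1 : ‖A i j‖ ^ 2 ≤ (Aᴴ * A).trace.re := by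
    rw [trace_re_conjTranspose_mul_self]
    have h11 : ‖A i j‖ ^ 2 ≤ ∑ k, Complex.normSq (A k j) := by
      rw [Complex.sq_norm]
      exact Finset.single_le_sum (f := fun k => Complex.normSq (A k j))
        (fun k _ => Complex.normSq_nonneg _) (Finset.mem_univ i)
    refine h11.trans ?_
    exact Finset.single_le_sum (f := fun m => ∑ k, Complex.normSq (A k m))
      (fun m _ => Finset.sum_nonneg fun k _ => Complex.normSq_nonneg _) (Finset.mem_univ j)
  -- step 2 : (Aᴴ A).trace.re = ∑ eig(P)^2 ≤ (∑ eig P)^2 = traceNorm A ^ 2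
  have hPP : Pᴴ * P = Aᴴ * A := by
    rw [hP.1.eq, ← pow_two, hPdef, (msqrt_sq A)]
  have h2 : (Aᴴ * A).trace.re = ∑ i, hP.1.eigenvalues i ^ 2 := by
    rw [← hPP]
    exact herm_trace_sq hP.1
  have h3 : ∑ i, hP.1.eigenvalues i ^ 2 ≤ (∑ i, hP.1.eigenvalues i) ^ 2 :=
    Finset.sum_sq_le_sq_sum_of_nonneg fun k _ => hP.eigenvalues_nonneg k
  have h4 : ∑ i, hP.1.eigenvalues i = traceNorm A := by
    rw [traceNorm_eq_traceNorm_sqrt A, traceNorm_hermitian hP.1]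
    exact Finset.sum_congr rfl fun k _ => (abs_of_nonneg (hP.eigenvalues_nonneg k)).symm
  have h5 := h1.trans (h2.le.trans (h3.trans_eq (by rw [h4])))
  nlinarith [norm_nonneg (A i j), traceNorm_nonneg A]

lemma traceNorm_hermitian_le {A : Mat d} (hA : A.IsHermitian) :
    traceNorm A ≤ Real.sqrt (d * ∑ j, ∑ k, Complex.normSq (A k j)) := by
  rw [traceNorm_hermitian hA]
  have h1 : (∑ i, |hA.eigenvalues i|) ^ 2 ≤ d * ∑ j, ∑ k, Complex.normSq (A k j) := by
    refine (sq_sum_le_card_mul_sum_sq (s := Finset.univ) (f := fun i => |hA.eigenvalues i|)).trans ?_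
    rw [← trace_re_conjTranspose_mul_self, herm_trace_sq hA]
    simp only [Finset.card_univ, Fintype.card_fin, sq_abs]
    exact le_refl _
  have h2 : 0 ≤ ∑ i, |hA.eigenvalues i| := Finset.sum_nonneg fun i _ => abs_nonneg _
  calc ∑ i, |hA.eigenvalues i| = Real.sqrt ((∑ i, |hA.eigenvalues i|) ^ 2) := by
        rw [Real.sqrt_sq h2]
    _ ≤ _ := Real.sqrt_le_sqrt h1

end Aux2

section Aux3
variable {d : ℕ}

structure Good (Φ : Mat d →ₗ[ℂ] Mat d) : Prop where
  psd : ∀ A : Mat d, A.PosSemidef → (Φ A).PosSemidef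
  tr : ∀ A : Mat d, (Φ A).trace = A.trace
  herm : ∀ A : Mat d, A.IsHermitian → (Φ A).IsHermitian

lemma Good.of_CPTP {Φ : Mat d →ₗ[ℂ] Mat d} (h : IsCPTP Φ) : Good Φ := by
  obtain ⟨n, K, hK, hN⟩ := h
  refine ⟨?_, ?_, ?_⟩
  · intro A hA
    rw [hK]
    exact posSemidef_sum _ _ fun i _ => hA.mul_mul_conjTranspose_same (K i)
  · intro A
    rw [hK, trace_sum]
    calc ∑ i, (K i * A * (K i)ᴴ).trace = ∑ i, ((K i)ᴴ * K i * A).trace := by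
          refine Finset.sum_congr rfl fun i _ => ?_
          rw [trace_mul_cycle]
      _ = ((∑ i, (K i)ᴴ * K i) * A).trace := by rw [Finset.sum_mul, trace_sum]
      _ = A.trace := by rw [hN, Matrix.one_mul]
  · intro A hA
    rw [hK]
    refine isHermitian_sum _ _ fun i _ => ?_
    unfold Matrix.IsHermitian
    simp only [Matrix.conjTranspose_mul, Matrix.conjTranspose_conjTranspose, hA.eq,
      Matrix.mul_assoc]

lemma Good.mul {Φ Ψ : Mat d →ₗ[ℂ] Mat d} (hΦ : Good Φ) (hΨ : Good Ψ) : Good (Φ * Ψ) :=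
  ⟨fun A h0 => by rw [Module.End.mul_apply]; exact hΦ.psd _ (hΨ.psd _ h0),
   fun A => by rw [Module.End.mul_apply, hΦ.tr, hΨ.tr],
   fun A h0 => by rw [Module.End.mul_apply]; exact hΦ.herm _ (hΨ.herm _ h0)⟩

lemma Good.one : Good (1 : Mat d →ₗ[ℂ] Mat d) :=
  ⟨fun A h0 => h0, fun A => rfl, fun A h0 => h0⟩

lemma Good.pow {Φ : Mat d →ₗ[ℂ] Mat d} (hΦ : Good Φ) (k : ℕ) : Good (Φ ^ k) := by
  induction k with
  | zero => simpa using Good.one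
  | succ k ih => rw [pow_succ]; exact ih.mul hΦ

lemma Good.listProd (L : List (Mat d →ₗ[ℂ] Mat d)) (h : ∀ Ψ ∈ L, Good Ψ) : Good L.prod := by
  induction L with
  | nil => simpa using Good.one
  | cons a L ih =>
    rw [List.prod_cons]
    exact (h a (List.mem_cons_self)).mul (ih fun Ψ hΨ => h Ψ (List.mem_cons_of_mem a hΨ))

lemma Good.traceNorm_apply_le {Φ : Mat d →ₗ[ℂ] Mat d} (hΦ : Good Φ) {A : Mat d}
    (hA : A.IsHermitian) : traceNorm (Φ A) ≤ traceNorm A := by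
  obtain ⟨U, hU, hU', hspec⟩ := exists_unitary_spectral hA
  set l := hA.eigenvalues with hl
  set Ap : Mat d := U * diagonal (fun i => ((max (l i) 0 : ℝ) : ℂ)) * star U with hApdef
  set Am : Mat d := U * diagonal (fun i => ((max (-l i) 0 : ℝ) : ℂ)) * star U with hAmdef
  have hAp : Ap.PosSemidef := psd_conj_diag U fun i => le_max_right _ _
  have hAm : Am.PosSemidef := psd_conj_diag U fun i => le_max_right _ _
  have hsplit : A = Ap - Am := by
    have he : (fun i => ((max (l i) 0 : ℝ) : ℂ) - ((max (-l i) 0 : ℝ) : ℂ))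
        = fun i => ((l i : ℝ) : ℂ) := by
      funext i
      rw [← Complex.ofReal_sub, max_zero_sub_max_neg_zero_eq_self]
    rw [hApdef, hAmdef, ← Matrix.sub_mul, ← Matrix.mul_sub, diagonal_sub, he]
    exact hspec
  have h1 : Φ A = Φ Ap - Φ Am := by rw [hsplit, map_sub]
  rw [h1]
  refine (traceNorm_sub_le (hΦ.psd _ hAp).1 (hΦ.psd _ hAm).1).trans_eq ?_
  rw [← psd_trace_re_eq_traceNorm (hΦ.psd _ hAp), ← psd_trace_re_eq_traceNorm (hΦ.psd _ hAm),
    hΦ.tr, hΦ.tr, hApdef, hAmdef, trace_re_conj_diag hU, trace_re_conj_diag hU,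
    traceNorm_hermitian hA, ← hl, ← Finset.sum_add_distrib]
  refine Finset.sum_congr rfl fun i _ => ?_
  rcases le_total 0 (l i) with h | h
  · rw [max_eq_left h, max_eq_right (neg_nonpos.mpr h), add_zero, abs_of_nonneg h]
  · rw [max_eq_right h, max_eq_left (neg_nonneg.mpr h), zero_add, abs_of_nonpos h]

set_option maxHeartbeats 1000000 in
lemma pow_sum_smul {A : Type*} [Ring A] [Module ℝ A] [SMulCommClass ℝ A A] [IsScalarTower ℝ A A]
    {ι : Type*} [Fintype ι] [DecidableEq ι] (c : ι → ℝ) (a : ι → A) (n : ℕ) :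
    (∑ i, c i • a i) ^ n
      = ∑ v : Fin n → ι, (∏ j, c (v j)) • (List.ofFn fun j => a (v j)).prod := by
  induction n with
  | zero => simp
  | succ n ih =>
    rw [pow_succ', ih, Finset.mul_sum]
    calc ∑ v : Fin n → ι, (∑ i, c i • a i) * ((∏ j, c (v j)) • (List.ofFn fun j => a (v j)).prod)
        = ∑ v : Fin n → ι, ∑ i, (c i • a i) * ((∏ j, c (v j)) • (List.ofFn fun j => a (v j)).prod) := by
          refine Finset.sum_congr rfl fun v _ => ?_
          rw [Finset.sum_mul]
      _ = ∑ i, ∑ v : Fin n → ι,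
            (∏ j, c ((Fin.cons i v : Fin (n + 1) → ι) j)) • (List.ofFn fun j => a ((Fin.cons i v : Fin (n + 1) → ι) j)).prod := by
          rw [Finset.sum_comm]
          refine Finset.sum_congr rfl fun i _ => Finset.sum_congr rfl fun v _ => ?_
          have hc : (∏ j : Fin (n + 1), c ((Fin.cons i v : Fin (n + 1) → ι) j)) = c i * ∏ j : Fin n, c (v j) := by
            rw [Fin.prod_univ_succ]
            simp only [Fin.cons_zero, Fin.cons_succ]
          have ha : (List.ofFn fun j => a ((Fin.cons i v : Fin (n + 1) → ι) j))
              = a i :: List.ofFn fun j => a (v j) := by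
            rw [List.ofFn_succ]
            simp only [Fin.cons_zero, Fin.cons_succ]
          rw [smul_mul_smul_comm, hc, ha, List.prod_cons]
      _ = ∑ v : Fin (n + 1) → ι, (∏ j, c (v j)) • (List.ofFn fun j => a (v j)).prod := by
          refine Eq.trans ?_ (Fintype.sum_equiv (Fin.consEquiv fun _ => ι)
            (fun p => (∏ j, c ((Fin.consEquiv fun _ => ι) p j)) •
              (List.ofFn fun j => a ((Fin.consEquiv fun _ => ι) p j)).prod) _ fun p => rfl)
          exact (Fintype.sum_prod_type (fun p : ι × (Fin n → ι) =>
            (∏ j, c ((Fin.consEquiv fun _ => ι) p j)) •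
              (List.ofFn fun j => a ((Fin.consEquiv fun _ => ι) p j)).prod)).symm

end Aux3


section Aux4
variable {d : ℕ}

lemma herm_trace_re {A : Mat d} (hA : A.IsHermitian) : A.trace = (A.trace.re : ℂ) := by
  have hd : ∀ i, A i i = ((A i i).re : ℂ) := by
    intro i
    have h := congrFun (congrFun hA.eq i) i
    rw [Matrix.conjTranspose_apply, Complex.star_def] at h
    exact (Complex.conj_eq_iff_re.mp h).symm
  rw [Matrix.trace, Complex.re_sum, Complex.ofReal_sum]
  exact Finset.sum_congr rfl fun i _ => hd i

lemma psd_trace_zero {P : Mat d} (hP : P.PosSemidef) (h : P.trace.re = 0) : P = 0 := by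
  obtain ⟨U, hU, hU', hspec⟩ := exists_unitary_spectral hP.1
  have hsum : ∑ i, hP.1.eigenvalues i = 0 := by
    have h2 := trace_re_conj_diag hU (fun i => hP.1.eigenvalues i)
    rw [← hspec] at h2
    rw [← h2, h]
  have hz : ∀ i ∈ Finset.univ, hP.1.eigenvalues i = 0 :=
    (Finset.sum_eq_zero_iff_of_nonneg fun i _ => hP.eigenvalues_nonneg i).mp hsum
  have : (fun i => ((hP.1.eigenvalues i : ℝ) : ℂ)) = fun _ => (0 : ℂ) := by
    funext i
    rw [hz i (Finset.mem_univ i)]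
    norm_num
  rw [hspec, this]
  simp

lemma density_traceNorm_one {ρ : Mat d} (hρ : IsDensity ρ) : traceNorm ρ = 1 := by
  rw [traceNorm_of_posSemidef hρ.1, hρ.2]
  norm_num

/-- pointwise decay on traceless hermitian matrices, from mixing -/
lemma pointwise_decay {Φ : Mat d →ₗ[ℂ] Mat d} (hG : Good Φ) {ρs : Mat d} (_ : IsDensity ρs)
    (hconv : ∀ ρ : Mat d, IsDensity ρ →
      Filter.Tendsto (fun k => traceNorm ((Φ ^ k) ρ - ρs)) Filter.atTop (nhds 0))
    {Δ : Mat d} (hΔ : Δ.IsHermitian) (ht : Δ.trace = 0) :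
    Filter.Tendsto (fun k => traceNorm ((Φ ^ k) Δ)) Filter.atTop (nhds 0) := by
  obtain ⟨U, hU, hU', hspec⟩ := exists_unitary_spectral hΔ
  set l := hΔ.eigenvalues with hl
  set P : Mat d := U * diagonal (fun i => ((max (l i) 0 : ℝ) : ℂ)) * star U with hPdef
  set N : Mat d := U * diagonal (fun i => ((max (-l i) 0 : ℝ) : ℂ)) * star U with hNdef
  have hP : P.PosSemidef := psd_conj_diag U fun i => le_max_right _ _
  have hN : N.PosSemidef := psd_conj_diag U fun i => le_max_right _ _
  have hsplit : Δ = P - N := by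
    have he : (fun i => ((max (l i) 0 : ℝ) : ℂ) - ((max (-l i) 0 : ℝ) : ℂ))
        = fun i => ((l i : ℝ) : ℂ) := by
      funext i
      rw [← Complex.ofReal_sub, max_zero_sub_max_neg_zero_eq_self]
    rw [hPdef, hNdef, ← Matrix.sub_mul, ← Matrix.mul_sub, diagonal_sub, he]
    exact hspec
  set t : ℝ := P.trace.re with htdef
  have ht0 : 0 ≤ t := by
    rw [htdef, psd_trace_re_eq_traceNorm hP]
    exact traceNorm_nonneg P
  have htraceN : N.trace = P.trace := by
    have := ht
    rw [hsplit, trace_sub] at this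
    linear_combination -this
  rcases eq_or_lt_of_le ht0 with h0 | hpos
  · -- t = 0 : Δ = 0
    have hP0 : P = 0 := psd_trace_zero hP h0.symm
    have hN0 : N = 0 := by
      refine psd_trace_zero hN ?_
      rw [htraceN, ← htdef, ← h0]
    have : Δ = 0 := by rw [hsplit, hP0, hN0, sub_zero]
    rw [this]
    simp only [map_zero, traceNorm_zero]
    exact tendsto_const_nhds
  · -- t > 0
    set ρ₁ : Mat d := t⁻¹ • P with hρ₁def
    set ρ₂ : Mat d := t⁻¹ • N with hρ₂def
    have htre : P.trace = (t : ℂ) := by rw [htdef]; exact herm_trace_re hP.1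
    have hρ₁ : IsDensity ρ₁ := by
      refine ⟨posSemidef_smul_real hP (inv_nonneg.mpr ht0), ?_⟩
      rw [hρ₁def, trace_smul, htre, Complex.real_smul, ← Complex.ofReal_mul,
        inv_mul_cancel₀ (ne_of_gt hpos)]
      norm_num
    have hρ₂ : IsDensity ρ₂ := by
      refine ⟨posSemidef_smul_real hN (inv_nonneg.mpr ht0), ?_⟩
      rw [hρ₂def, trace_smul, htraceN, htre, Complex.real_smul, ← Complex.ofReal_mul,
        inv_mul_cancel₀ (ne_of_gt hpos)]
      norm_num
    have hΔt : Δ = t • (ρ₁ - ρ₂) := by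
      rw [hρ₁def, hρ₂def, ← smul_sub, smul_smul, mul_inv_cancel₀ (ne_of_gt hpos), one_smul]
      exact hsplit
    have hkey : ∀ k, traceNorm ((Φ ^ k) Δ)
        ≤ |t| * (traceNorm ((Φ ^ k) ρ₁ - ρs) + traceNorm ((Φ ^ k) ρ₂ - ρs)) := by
      intro k
      have h1 : (Φ ^ k) Δ = t • (((Φ ^ k) ρ₁ - ρs) - ((Φ ^ k) ρ₂ - ρs)) := by
        rw [hΔt, LinearMap.map_smul_of_tower, map_sub]
        congr 1
        abel
      rw [h1, traceNorm_smul_real]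
      have hherm1 : ((Φ ^ k) ρ₁ - ρs).IsHermitian :=
        ((hG.pow k).psd _ hρ₁.1).1.sub ‹IsDensity ρs›.1.1
      have hherm2 : ((Φ ^ k) ρ₂ - ρs).IsHermitian :=
        ((hG.pow k).psd _ hρ₂.1).1.sub ‹IsDensity ρs›.1.1
      exact mul_le_mul_of_nonneg_left (traceNorm_sub_le hherm1 hherm2) (abs_nonneg t)
    refine squeeze_zero (fun k => traceNorm_nonneg _) hkey ?_
    have := ((hconv ρ₁ hρ₁).add (hconv ρ₂ hρ₂)).const_mul |t|
    simpa using this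

end Aux4

section Aux5
variable {d : ℕ}

lemma uniform_halving {Φ : Mat d →ₗ[ℂ] Mat d} (hG : Good Φ)
    (hpt : ∀ Δ : Mat d, Δ.IsHermitian → Δ.trace = 0 →
      Filter.Tendsto (fun k => traceNorm ((Φ ^ k) Δ)) Filter.atTop (nhds 0)) :
    ∃ n : ℕ, 1 ≤ n ∧ ∀ Δ : Mat d, Δ.IsHermitian → Δ.trace = 0 →
      traceNorm ((Φ ^ n) Δ) ≤ (1 / 2) * traceNorm Δ := by
  letI : NormedAddCommGroup (Mat d) := Matrix.normedAddCommGroup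
  letI : NormedSpace ℝ (Mat d) := Matrix.normedSpace
  haveI : FiniteDimensional ℝ (Mat d) := Module.Finite.trans ℂ (Mat d)
  haveI : CompleteSpace (Mat d) := FiniteDimensional.complete ℝ _
  set V : Submodule ℝ (Mat d) :=
    { carrier := {A : Mat d | A.IsHermitian ∧ A.trace = 0}
      add_mem' := fun ha hb => ⟨ha.1.add hb.1, by rw [trace_add, ha.2, hb.2, add_zero]⟩
      zero_mem' := ⟨isHermitian_zero, Matrix.trace_zero (Fin d) ℂ⟩
      smul_mem' := fun c A hA => ⟨isHermitian_smul_real hA.1 c, by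
        rw [trace_smul, hA.2, smul_zero]⟩ } with hV
  let b : Module.Basis (Fin (Module.finrank ℝ V)) ℝ V := Module.finBasis ℝ V
  let e : V →L[ℝ] (Fin (Module.finrank ℝ V) → ℝ) :=
    LinearMap.toContinuousLinearMap b.equivFun.toLinearMap
  letI : SeminormedAddCommGroup (V →L[ℝ] (Fin (Module.finrank ℝ V) → ℝ)) :=
    ContinuousLinearMap.toSeminormedAddCommGroup (𝕜 := ℝ) (𝕜₂ := ℝ) (σ₁₂ := RingHom.id ℝ)
  set C : ℝ := ‖e‖ + 1 with hC
  have hC0 : 0 < C := by positivity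
  have hcoord : ∀ (x : V) (i), |b.equivFun x i| ≤ C * traceNorm (x : Mat d) := by
    intro x i
    have h1 : |b.equivFun x i| ≤ ‖e x‖ := by
      rw [← Real.norm_eq_abs]
      exact norm_le_pi_norm (e x) i
    have h2 : ‖e x‖ ≤ ‖e‖ * ‖x‖ := e.le_opNorm x
    have h3 : ‖x‖ ≤ traceNorm (x : Mat d) := by
      show ‖(x : Mat d)‖ ≤ _
      rw [Matrix.norm_le_iff (traceNorm_nonneg _)]
      intro i j
      exact abs_entry_le_traceNorm i j
    have h4 : ‖e‖ ≤ C := by rw [hC]; linarith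
    calc |b.equivFun x i| ≤ ‖e‖ * ‖x‖ := h1.trans h2
      _ ≤ C * traceNorm (x : Mat d) := by
          exact mul_le_mul h4 h3 (norm_nonneg _) hC0.le
  -- the sum of trace norms of images of basis vectors tends to zero
  have hsum0 : Filter.Tendsto
      (fun k => ∑ i, traceNorm ((Φ ^ k) ((b i : Mat d)))) Filter.atTop (nhds 0) := by
    have := tendsto_finset_sum (Finset.univ : Finset (Fin (Module.finrank ℝ V)))
      (fun i _ => hpt (b i : Mat d) (b i).2.1 (b i).2.2)
    simpa using this
  obtain ⟨N, hN⟩ := Filter.eventually_atTop.mp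
    (hsum0.eventually (gt_mem_nhds (show (0:ℝ) < 1 / (2 * C) by positivity)))
  refine ⟨N + 1, le_add_self, ?_⟩
  intro Δ hΔ ht
  set x : V := ⟨Δ, hΔ, ht⟩ with hx
  have hdecomp : (Φ ^ (N + 1)) Δ = ∑ i, b.equivFun x i • (Φ ^ (N + 1)) (b i : Mat d) := by
    have h5 : Δ = ∑ i, b.equivFun x i • (b i : Mat d) := by
      have := b.sum_equivFun x
      calc Δ = ((∑ i, b.equivFun x i • b i : V) : Mat d) := by rw [this]
        _ = ∑ i, b.equivFun x i • (b i : Mat d) := by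
            push_cast
            rfl
    conv_lhs => rw [h5]
    rw [map_sum]
    exact Finset.sum_congr rfl fun i _ => LinearMap.map_smul_of_tower _ _ _
  have hHi : ∀ i, ((Φ ^ (N + 1)) ((b i : Mat d))).IsHermitian :=
    fun i => (hG.pow (N + 1)).herm _ (b i).2.1
  calc traceNorm ((Φ ^ (N + 1)) Δ)
      ≤ ∑ i, traceNorm (b.equivFun x i • (Φ ^ (N + 1)) (b i : Mat d)) := by
        rw [hdecomp]
        exact traceNorm_sum_le _ _ fun i _ => isHermitian_smul_real (hHi i) _
    _ = ∑ i, |b.equivFun x i| * traceNorm ((Φ ^ (N + 1)) (b i : Mat d)) := by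
        exact Finset.sum_congr rfl fun i _ => traceNorm_smul_real _ _
    _ ≤ ∑ i, (C * traceNorm Δ) * traceNorm ((Φ ^ (N + 1)) (b i : Mat d)) := by
        refine Finset.sum_le_sum fun i _ => ?_
        exact mul_le_mul_of_nonneg_right (hcoord x i) (traceNorm_nonneg _)
    _ = (C * traceNorm Δ) * ∑ i, traceNorm ((Φ ^ (N + 1)) (b i : Mat d)) := by
        rw [Finset.mul_sum]
    _ ≤ (C * traceNorm Δ) * (1 / (2 * C)) := by
        refine mul_le_mul_of_nonneg_left (hN (N + 1) (Nat.le_succ N)).le ?_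
        exact mul_nonneg hC0.le (traceNorm_nonneg _)
    _ = (1 / 2) * traceNorm Δ := by
        field_simp
  end Aux5

/-- Stability of mixing under randomization: a convex combination of a mixing channel with an
arbitrary channel is mixing. -/
theorem mixing_stable_under_randomization {d : ℕ} (Φ Φ' : Mat d →ₗ[ℂ] Mat d)
    (hΦ : IsCPTP Φ) (hΦ' : IsCPTP Φ') (hM : IsMixing Φ)
    (p : ℝ) (hp : 0 < p) (hp1 : p ≤ 1) :
    IsMixing ((p : ℂ) • Φ + ((1 - p : ℝ) : ℂ) • Φ') := by

  obtain ⟨ρst, hρst, hconv⟩ := hM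
  have hGΦ : Good Φ := Good.of_CPTP hΦ
  have hGΦ' : Good Φ' := Good.of_CPTP hΦ'
  have hq0 : (0 : ℝ) ≤ 1 - p := by linarith
  set c : Bool → ℝ := fun b => bif b then p else 1 - p with hc
  set F : Bool → (Mat d →ₗ[ℂ] Mat d) := fun b => bif b then Φ else Φ' with hF
  have hsm : ∀ (r : ℝ) (Ψ : Mat d →ₗ[ℂ] Mat d), ((r : ℂ) • Ψ) = r • Ψ := fun r Ψ => by
    rw [← Complex.coe_algebraMap, algebraMap_smul]
  set T : Mat d →ₗ[ℂ] Mat d := (p : ℂ) • Φ + ((1 - p : ℝ) : ℂ) • Φ' with hT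
  have hTS : T = ∑ b : Bool, c b • F b := by
    rw [Fintype.sum_bool, hT, hsm, hsm, hc, hF]
    simp only [cond_true, cond_false]
  have hTapp : ∀ A : Mat d, T A = p • Φ A + (1 - p) • Φ' A := by
    intro A
    rw [hT, LinearMap.add_apply, LinearMap.smul_apply, LinearMap.smul_apply,
      real_smul_eq, real_smul_eq]
  have hGT : Good T := by
    refine ⟨?_, ?_, ?_⟩
    · intro A hA
      rw [hTapp]
      exact (posSemidef_smul_real (hGΦ.psd A hA) hp.le).add
        (posSemidef_smul_real (hGΦ'.psd A hA) hq0)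
    · intro A
      rw [hTapp, trace_add, trace_smul, trace_smul, hGΦ.tr, hGΦ'.tr,
        Complex.real_smul, Complex.real_smul]
      push_cast
      ring
    · intro A hA
      rw [hTapp]
      exact (isHermitian_smul_real (hGΦ.herm A hA) p).add
        (isHermitian_smul_real (hGΦ'.herm A hA) (1 - p))
  obtain ⟨n, hn1, hhalf⟩ := uniform_halving hGΦ fun Δ hΔ ht =>
    pointwise_decay hGΦ hρst hconv hΔ ht
  set γ : ℝ := 1 - p ^ n / 2 with hγ
  have hpn0 : 0 < p ^ n := pow_pos hp n
  have hpn1 : p ^ n ≤ 1 := pow_le_one₀ hp.le hp1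
  have hγ0 : 0 ≤ γ := by rw [hγ]; linarith
  have hγ1 : γ < 1 := by rw [hγ]; linarith
  -- scalar identity : coefficients sum to one
  have hcb : ∑ b : Bool, c b = 1 := by
    rw [Fintype.sum_bool, hc]
    simp only [cond_true, cond_false]
    ring
  have hsumc : ∑ v : Fin n → Bool, (∏ j, c (v j)) = 1 := by
    have hs := pow_sum_smul (A := ℝ) c (fun _ => (1 : ℝ)) n
    simp only [smul_eq_mul, mul_one, List.ofFn_const, List.prod_replicate, one_pow] at hs
    rw [hcb, one_pow] at hs
    exact hs.symm
  set v₀ : Fin n → Bool := fun _ => true with hv₀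
  have hcv₀ : (∏ j, c (v₀ j)) = p ^ n := by
    rw [hv₀, hc]
    simp only [cond_true]
    simp [Finset.prod_const]
  set W : (Fin n → Bool) → (Mat d →ₗ[ℂ] Mat d) := fun v => (List.ofFn fun j => F (v j)).prod
    with hW
  have hGW : ∀ v, Good (W v) := by
    intro v
    refine Good.listProd _ fun Ψ hΨ => ?_
    rw [List.mem_ofFn] at hΨ
    obtain ⟨j, rfl⟩ := hΨ
    rcases Bool.eq_false_or_eq_true (v j) with hvj | hvj <;>
      rw [hF] <;> simp only [hvj, cond_true, cond_false]
    · exact hGΦ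
    · exact hGΦ'
  have hWv₀ : W v₀ = Φ ^ n := by
    rw [hW, hv₀, hF]
    simp only [cond_true]
    simp [List.ofFn_const, List.prod_replicate]
  have hTn : T ^ n = ∑ v : Fin n → Bool, (∏ j, c (v j)) • W v := by
    rw [hTS]
    exact pow_sum_smul c F n
  have hprodnn : ∀ v : Fin n → Bool, 0 ≤ ∏ j, c (v j) := by
    intro v
    refine Finset.prod_nonneg fun j _ => ?_
    cases v j <;> simp [hc, hp.le, hq0]
  have hcontract : ∀ Δ : Mat d, Δ.IsHermitian → Δ.trace = 0 →
      traceNorm ((T ^ n) Δ) ≤ γ * traceNorm Δ := by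
    intro Δ hΔ ht
    have happ : (T ^ n) Δ = ∑ v : Fin n → Bool, (∏ j, c (v j)) • W v Δ := by
      rw [hTn, LinearMap.sum_apply]
      exact Finset.sum_congr rfl fun v _ => rfl
    have h3 : ∑ v ∈ Finset.univ.erase v₀, (∏ j, c (v j)) = 1 - p ^ n := by
      have h := Finset.add_sum_erase Finset.univ (fun v : Fin n → Bool => ∏ j, c (v j))
        (Finset.mem_univ v₀)
      rw [hsumc, hcv₀] at h
      linarith
    calc traceNorm ((T ^ n) Δ)
        ≤ ∑ v : Fin n → Bool, traceNorm ((∏ j, c (v j)) • W v Δ) := by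
          rw [happ]
          exact traceNorm_sum_le _ _ fun v _ => isHermitian_smul_real ((hGW v).herm _ hΔ) _
      _ = ∑ v : Fin n → Bool, (∏ j, c (v j)) * traceNorm (W v Δ) := by
          refine Finset.sum_congr rfl fun v _ => ?_
          rw [traceNorm_smul_real, abs_of_nonneg (hprodnn v)]
      _ ≤ γ * traceNorm Δ := by
          rw [← Finset.add_sum_erase _ _ (Finset.mem_univ v₀)]
          have h1 : (∏ j, c (v₀ j)) * traceNorm (W v₀ Δ) ≤ p ^ n * ((1 / 2) * traceNorm Δ) := by
            rw [hcv₀, hWv₀]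
            exact mul_le_mul_of_nonneg_left (hhalf Δ hΔ ht) hpn0.le
          have h2 : ∑ v ∈ Finset.univ.erase v₀, (∏ j, c (v j)) * traceNorm (W v Δ)
              ≤ (1 - p ^ n) * traceNorm Δ := by
            rw [← h3, Finset.sum_mul]
            refine Finset.sum_le_sum fun v _ => ?_
            exact mul_le_mul_of_nonneg_left ((hGW v).traceNorm_apply_le hΔ) (hprodnn v)
          calc (∏ j, c (v₀ j)) * traceNorm (W v₀ Δ)
                + ∑ v ∈ Finset.univ.erase v₀, (∏ j, c (v j)) * traceNorm (W v Δ)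
              ≤ p ^ n * ((1 / 2) * traceNorm Δ) + (1 - p ^ n) * traceNorm Δ := add_le_add h1 h2
            _ = γ * traceNorm Δ := by rw [hγ]; ring
  have hkeep : ∀ (k : ℕ) (X : Mat d), X.IsHermitian → X.trace = 0 →
      ((T ^ k) X).IsHermitian ∧ ((T ^ k) X).trace = 0 := fun k X hX ht =>
    ⟨(hGT.pow k).herm _ hX, by rw [(hGT.pow k).tr, ht]⟩
  have hblock : ∀ (q : ℕ) (X : Mat d), X.IsHermitian → X.trace = 0 →
      traceNorm ((T ^ (n * q)) X) ≤ γ ^ q * traceNorm X := by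
    intro q
    induction q with
    | zero => intro X hX ht; simp
    | succ q ih =>
      intro X hX ht
      have he : T ^ (n * (q + 1)) = T ^ (n * q) * T ^ n := by rw [← pow_add, Nat.mul_succ]
      rw [he, Module.End.mul_apply]
      refine (ih ((T ^ n) X) (hkeep n X hX ht).1 (hkeep n X hX ht).2).trans ?_
      rw [pow_succ]
      calc γ ^ q * traceNorm ((T ^ n) X) ≤ γ ^ q * (γ * traceNorm X) :=
            mul_le_mul_of_nonneg_left (hcontract X hX ht) (pow_nonneg hγ0 q)
        _ = γ ^ q * γ * traceNorm X := by ring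
  have hdecay : ∀ (k : ℕ) (X : Mat d), X.IsHermitian → X.trace = 0 →
      traceNorm ((T ^ k) X) ≤ γ ^ (k / n) * traceNorm X := by
    intro k X hX ht
    have hk : n * (k / n) + k % n = k := Nat.div_add_mod k n
    have he : T ^ k = T ^ (n * (k / n)) * T ^ (k % n) := by rw [← pow_add, hk]
    rw [he, Module.End.mul_apply]
    refine (hblock (k / n) ((T ^ (k % n)) X) (hkeep (k % n) X hX ht).1
      (hkeep (k % n) X hX ht).2).trans ?_
    refine mul_le_mul_of_nonneg_left ?_ (pow_nonneg hγ0 _)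
    exact (hGT.pow (k % n)).traceNorm_apply_le hX
  have hγtend : Filter.Tendsto (fun k : ℕ => γ ^ (k / n)) Filter.atTop (nhds 0) := by
    have h1 : Filter.Tendsto (fun k : ℕ => k / n) Filter.atTop Filter.atTop :=
      le_of_eq (Filter.map_div_atTop_eq_nat n hn1)
    exact (tendsto_pow_atTop_nhds_zero_of_lt_one hγ0 hγ1).comp h1
  -- norm instances
  letI : NormedAddCommGroup (Mat d) := Matrix.normedAddCommGroup
  letI : NormedSpace ℝ (Mat d) := Matrix.normedSpace
  haveI : FiniteDimensional ℝ (Mat d) := Module.Finite.trans ℂ (Mat d)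
  haveI : CompleteSpace (Mat d) := FiniteDimensional.complete ℝ _
  set σ : ℕ → Mat d := fun k => (T ^ k) ρst with hσ
  have hσk : ∀ k, σ k = (T ^ k) ρst := fun k => rfl
  have hσd : ∀ k, IsDensity (σ k) := fun k =>
    ⟨(hGT.pow k).psd _ hρst.1, by rw [hσk k, (hGT.pow k).tr, hρst.2]⟩
  have hσherm : ∀ k, (σ k).IsHermitian := fun k => (hσd k).1.1
  have hbound : ∀ (k m N : ℕ), N ≤ k → N ≤ m → dist (σ k) (σ m) ≤ 2 * γ ^ (N / n) := by
    have main : ∀ N k m, N ≤ k → k ≤ m → dist (σ k) (σ m) ≤ 2 * γ ^ (N / n) := by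
      intro N k m hNk hkm
      have hX : ((T ^ (m - k)) ρst - ρst).IsHermitian :=
        ((hGT.pow _).psd _ hρst.1).1.sub hρst.1.1
      have htX : ((T ^ (m - k)) ρst - ρst).trace = 0 := by
        rw [trace_sub, (hGT.pow _).tr, sub_self]
      have hdiff : σ m - σ k = (T ^ k) ((T ^ (m - k)) ρst - ρst) := by
        rw [map_sub, hσk m, hσk k, ← Module.End.mul_apply, ← pow_add,
          Nat.add_sub_cancel' hkm]
      have h2 : traceNorm (σ m - σ k) ≤ γ ^ (k / n) * traceNorm ((T ^ (m - k)) ρst - ρst) := by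
        rw [hdiff]
        exact hdecay k _ hX htX
      have h3 : traceNorm ((T ^ (m - k)) ρst - ρst) ≤ 2 := by
        refine (traceNorm_sub_le ((hGT.pow _).psd _ hρst.1).1 hρst.1.1).trans ?_
        rw [density_traceNorm_one ⟨(hGT.pow _).psd _ hρst.1, by rw [(hGT.pow _).tr, hρst.2]⟩,
          density_traceNorm_one hρst]
        norm_num
      have h4 : γ ^ (k / n) ≤ γ ^ (N / n) :=
        pow_le_pow_of_le_one hγ0 hγ1.le (Nat.div_le_div_right hNk)
      have h5 : dist (σ k) (σ m) ≤ traceNorm (σ m - σ k) := by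
        rw [dist_comm, dist_eq_norm]
        rw [Matrix.norm_le_iff (traceNorm_nonneg _)]
        intro i j
        exact abs_entry_le_traceNorm i j
      calc dist (σ k) (σ m) ≤ γ ^ (k / n) * traceNorm ((T ^ (m - k)) ρst - ρst) := h5.trans h2
        _ ≤ γ ^ (N / n) * 2 := mul_le_mul h4 h3 (traceNorm_nonneg _) (pow_nonneg hγ0 _)
        _ = 2 * γ ^ (N / n) := by ring
    intro k m N hNk hNm
    rcases le_total k m with h | h
    · exact main N k m hNk h
    · rw [dist_comm]
      exact main N m k hNm h
  have hcauchy : CauchySeq σ := cauchySeq_of_le_tendsto_0 (fun N => 2 * γ ^ (N / n))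
    hbound (by simpa using hγtend.const_mul 2)
  obtain ⟨ρs, hρs_lim⟩ := cauchySeq_tendsto_of_complete hcauchy
  have hentry : ∀ i j, Filter.Tendsto (fun k => σ k i j) Filter.atTop (nhds (ρs i j)) := by
    intro i j
    rw [tendsto_iff_dist_tendsto_zero]
    refine squeeze_zero (fun k => dist_nonneg) (fun k => ?_)
      (tendsto_iff_dist_tendsto_zero.mp hρs_lim)
    rw [dist_eq_norm, dist_eq_norm]
    have he : σ k i j - ρs i j = (σ k - ρs) i j := by simp [Matrix.sub_apply]
    rw [he]
    exact Matrix.norm_entry_le_entrywise_sup_norm (σ k - ρs)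
  have hρsherm : ρs.IsHermitian := by
    ext i j
    rw [Matrix.conjTranspose_apply, Complex.star_def]
    have h1 : Filter.Tendsto (fun k => (starRingEnd ℂ) (σ k j i)) Filter.atTop
        (nhds ((starRingEnd ℂ) (ρs j i))) :=
      (Complex.continuous_conj.tendsto _).comp (hentry j i)
    have h2 : (fun k => (starRingEnd ℂ) (σ k j i)) = fun k => σ k i j := by
      funext k
      have h := congrFun (congrFun (hσherm k).eq i) j
      rw [Matrix.conjTranspose_apply, Complex.star_def] at h
      exact h
    rw [h2] at h1
    exact tendsto_nhds_unique h1 (hentry i j)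
  have hρspsd : ρs.PosSemidef := by
    refine posSemidef_iff_dotProduct_mulVec.mpr ⟨hρsherm, fun x => ?_⟩
    have hexp : ∀ M : Mat d, dotProduct (star x) (M *ᵥ x)
        = ∑ i, ∑ j, star (x i) * M i j * x j := by
      intro M
      rw [dotProduct]
      refine Finset.sum_congr rfl fun i _ => ?_
      rw [Pi.star_apply, Matrix.mulVec, dotProduct, Finset.mul_sum]
      refine Finset.sum_congr rfl fun j _ => ?_
      ring
    have hftend : Filter.Tendsto (fun k => dotProduct (star x) (σ k *ᵥ x))
        Filter.atTop (nhds (dotProduct (star x) (ρs *ᵥ x))) := by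
      simp only [hexp]
      refine tendsto_finset_sum _ fun i _ => tendsto_finset_sum _ fun j _ => ?_
      exact (tendsto_const_nhds.mul (hentry i j)).mul tendsto_const_nhds
    have hfpos : ∀ k, 0 ≤ dotProduct (star x) (σ k *ᵥ x) := fun k => (hσd k).1.dotProduct_mulVec_nonneg x
    have hre : 0 ≤ (dotProduct (star x) (ρs *ᵥ x)).re := by
      refine ge_of_tendsto' ((Complex.continuous_re.tendsto _).comp hftend) fun k => ?_
      exact (Complex.le_def.mp (hfpos k)).1
    have him : (dotProduct (star x) (ρs *ᵥ x)).im = 0 := by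
      have h1 : Filter.Tendsto (fun k => (dotProduct (star x) (σ k *ᵥ x)).im)
          Filter.atTop (nhds ((dotProduct (star x) (ρs *ᵥ x)).im)) :=
        (Complex.continuous_im.tendsto _).comp hftend
      have h2 : (fun k => (dotProduct (star x) (σ k *ᵥ x)).im) = fun _ => (0 : ℝ) :=
        funext fun k => ((Complex.le_def.mp (hfpos k)).2).symm
      rw [h2] at h1
      exact tendsto_nhds_unique h1 tendsto_const_nhds
    rw [Complex.le_def]
    refine ⟨by simpa using hre, by simpa using him.symm⟩
  have hρstr : ρs.trace = 1 := by
    have h1 : Filter.Tendsto (fun k => (σ k).trace) Filter.atTop (nhds ρs.trace) := by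
      simp only [Matrix.trace]
      exact tendsto_finset_sum _ fun i _ => hentry i i
    have h2 : (fun k => (σ k).trace) = fun _ => (1 : ℂ) := funext fun k => (hσd k).2
    rw [h2] at h1
    exact tendsto_nhds_unique h1 tendsto_const_nhds
  refine ⟨ρs, ⟨hρspsd, hρstr⟩, ?_⟩
  intro ρ hρ
  have hh1 : ∀ k, traceNorm ((T ^ k) ρ - ρs)
      ≤ γ ^ (k / n) * traceNorm (ρ - ρst) + traceNorm (σ k - ρs) := by
    intro k
    have hsplit2 : (T ^ k) ρ - ρs = (T ^ k) (ρ - ρst) + (σ k - ρs) := by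
      rw [map_sub, hσk k]
      abel
    rw [hsplit2]
    refine (traceNorm_add_le ((hGT.pow k).herm _ (hρ.1.1.sub hρst.1.1))
      ((hσherm k).sub hρsherm)).trans ?_
    refine add_le_add_left ?_ _
    exact hdecay k _ (hρ.1.1.sub hρst.1.1) (by rw [trace_sub, hρ.2, hρst.2, sub_self])
  refine squeeze_zero (fun k => traceNorm_nonneg _) hh1 ?_
  have hterm2 : Filter.Tendsto (fun k => traceNorm (σ k - ρs)) Filter.atTop (nhds 0) := by
    have hnsq : Filter.Tendsto (fun m => ∑ j, ∑ k, Complex.normSq ((σ m - ρs) k j))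
        Filter.atTop (nhds 0) := by
      have hone : ∀ (k : Fin d) (j : Fin d), Filter.Tendsto
          (fun m => Complex.normSq ((σ m - ρs) k j)) Filter.atTop (nhds 0) := by
        intro k j
        have h0 : Filter.Tendsto (fun m => σ m k j - ρs k j) Filter.atTop (nhds 0) := by
          simpa using (hentry k j).sub
            (tendsto_const_nhds : Filter.Tendsto (fun _ : ℕ => ρs k j) Filter.atTop (nhds (ρs k j)))
        have h1 := (Complex.continuous_normSq.tendsto 0).comp h0
        simpa [Matrix.sub_apply, Function.comp_def] using h1
      simpa using tendsto_finset_sum _ fun j _ => tendsto_finset_sum _ fun k _ => hone k j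
    refine squeeze_zero (fun m => traceNorm_nonneg _)
      (fun m => traceNorm_hermitian_le ((hσherm m).sub hρsherm)) ?_
    have h1 : Filter.Tendsto (fun m => (d : ℝ) * ∑ j, ∑ k, Complex.normSq ((σ m - ρs) k j))
        Filter.atTop (nhds 0) := by
      simpa using hnsq.const_mul (d : ℝ)
    have h2 := (Real.continuous_sqrt.tendsto 0).comp h1
    rw [Real.sqrt_zero] at h2
    exact h2
  have hterm1 : Filter.Tendsto (fun k => γ ^ (k / n) * traceNorm (ρ - ρst))
      Filter.atTop (nhds 0) := by
    simpa using hγtend.mul_const (traceNorm (ρ - ρst))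
  simpa using hterm1.add hterm2
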